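/- Under the hypotheses of the previous lemma, if (W_n) is an increasing sequence of compact subsets of ℝ^d with ∪ₙ Wₙ = ℝ^d and there exists an increasing sequence rₙ → ∞ with |(∂Wₙ ⊕ rₙ) ∩ Wₙ| = o(|Wₙ|), then (1/|Wₙ|) ∫_{Wₙ^k} f(x) dx converges, as n → ∞, to ∫_{ℝ^{d(k-1)}} f(0,x₂,…,x_k) dx₂⋯dx_k. -/

import Mathlib

open MeasureTheory Metric Set Filter

lemma aux_ball_subset {X : Type*} [NormedAddCommGroup X] [NormedSpace ℝ X]
    {W : Set X} {c : X} {r : ℝ} (hc : c ∈ W) (h : r < infDist c (frontier W)) :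
    ball c r ⊆ W := by
  intro x hx
  by_contra hxW
  have hr0 : 0 < r := lt_of_le_of_lt dist_nonneg (mem_ball.1 hx)
  have hseg : segment ℝ c x ⊆ ball c r :=
    (convex_ball c r).segment_subset (mem_ball_self hr0) hx
  have hne : (segment ℝ c x ∩ frontier W).Nonempty := by
    by_contra hemp
    rw [Set.not_nonempty_iff_eq_empty] at hemp
    have hdisj : ∀ y ∈ segment ℝ c x, y ∉ frontier W := fun y hy hyf =>
      (Set.eq_empty_iff_forall_notMem.1 hemp y) ⟨hy, hyf⟩
    have hsub : segment ℝ c x ⊆ interior W ∪ (closure W)ᶜ := by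
      intro y hy
      by_cases hcl : y ∈ closure W
      · left
        rcases (closure_eq_interior_union_frontier W ▸ hcl) with h1 | h1
        · exact h1
        · exact absurd h1 (hdisj y hy)
      · right; exact hcl
    obtain ⟨y, hy1, hy2, hy3⟩ :=
      (convex_segment c x).isPreconnected (interior W) (closure W)ᶜ isOpen_interior
        isClosed_closure.isOpen_compl hsub
        ⟨c, left_mem_segment ℝ c x, by
          rcases (closure_eq_interior_union_frontier W ▸ subset_closure hc) with h1 | h1
          · exact h1
          · exact absurd h1 (hdisj c (left_mem_segment ℝ c x))⟩
        ⟨x, right_mem_segment ℝ c x, fun hcl => by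
          rcases (closure_eq_interior_union_frontier W ▸ hcl) with h1 | h1
          · exact hxW (interior_subset h1)
          · exact hdisj x (right_mem_segment ℝ c x) h1⟩
    exact hy3 (subset_closure (interior_subset hy2))
  obtain ⟨y, hyseg, hyf⟩ := hne
  have h1 : infDist c (frontier W) ≤ dist c y := infDist_le_dist_of_mem hyf
  have h2 : dist c y < r := by
    have := hseg hyseg
    rw [mem_ball] at this
    rw [dist_comm]; exact this
  linarith

lemma aux_tail_tendsto {Y : Type*} [MeasurableSpace Y] {μ : Measure Y}
    (G : Y → ℝ) (hG : Integrable G μ) (hGnn : ∀ z, 0 ≤ G z)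
    (N : Y → ℝ) (hN : Measurable N)
    (r : ℕ → ℝ) (hrlim : Tendsto r atTop atTop) :
    Tendsto (fun n => ∫ z, Set.indicator {z : Y | r n ≤ N z} G z ∂μ) atTop (nhds 0) := by
  have h0 : (0 : ℝ) = ∫ z, (0 : ℝ) ∂μ := by simp
  rw [h0]
  apply tendsto_integral_of_dominated_convergence G
    (fun n => hG.1.indicator (measurableSet_le measurable_const hN))
    hG
  · intro n
    filter_upwards with z
    rw [Real.norm_eq_abs]
    by_cases hz : z ∈ {z : Y | r n ≤ N z}
    · rw [Set.indicator_of_mem hz]; rw [abs_of_nonneg (hGnn z)]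
    · rw [Set.indicator_of_notMem hz]; simpa using hGnn z
  · filter_upwards with z
    have : ∀ᶠ n in atTop, Set.indicator {z : Y | r n ≤ N z} G z = 0 := by
      filter_upwards [hrlim.eventually_gt_atTop (N z)] with n hn
      exact Set.indicator_of_notMem (by simpa using hn) G
    exact Tendsto.congr' (EventuallyEq.symm this) tendsto_const_nhds


section Key
variable {d k : ℕ}

local notation "E" => EuclideanSpace ℝ (Fin d)
local notation "Y" => (Fin k → EuclideanSpace ℝ (Fin d))

lemma aux_qmp :
    Measure.QuasiMeasurePreserving (fun p : E × Y => (fun j => p.2 j - p.1 : Y))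
      ((volume : Measure E).prod (volume : Measure Y)) (volume : Measure Y) := by
  have hgm : Measurable (Function.uncurry fun (c : E) (y : Y) => (fun j => y j - c : Y)) := by
    apply measurable_pi_lambda
    intro j
    exact ((measurable_pi_apply j).comp measurable_snd).sub measurable_fst
  have shear : MeasurePreserving (fun p : E × Y => (p.1, (fun j => p.2 j - p.1 : Y)))
      ((volume : Measure E).prod (volume : Measure Y))
      ((volume : Measure E).prod (volume : Measure Y)) := by
    apply (MeasurePreserving.id (volume : Measure E)).skew_product hgm
    filter_upwards with c
    have : (fun (y : Y) => (fun j => y j - c : Y)) = fun y => y + (-(fun _ => c : Y)) := by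
      funext y; funext j; simp [sub_eq_add_neg]
    rw [this]
    exact (measurePreserving_add_right (volume : Measure Y) _).map_eq
  exact Measure.quasiMeasurePreserving_snd.comp shear.quasiMeasurePreserving

lemma key_repr (g : Y → ℝ) (hg : Integrable g)
    (W : Set E) (hWc : IsCompact W) :
    (∫ x in Set.univ.pi (fun _ : Fin (k+1) => W), g (fun j => x j.succ - x 0)
      = ∫ c, Set.indicator W
          (fun c => ∫ z, Set.indicator {z : Y | ∀ j, z j + c ∈ W} g z) c)
    ∧ Integrable (fun c => Set.indicator W
          (fun c => ∫ z, Set.indicator {z : Y | ∀ j, z j + c ∈ W} g z) c) := by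
  have hWm : MeasurableSet W := hWc.measurableSet
  have hWfin : volume W < ⊤ := hWc.measure_lt_top
  have hpiWm : MeasurableSet (Set.univ.pi (fun _ : Fin (k+1) => W)) :=
    MeasurableSet.univ_pi fun _ => hWm
  have hpiWkm : MeasurableSet (Set.univ.pi (fun _ : Fin k => W)) :=
    MeasurableSet.univ_pi fun _ => hWm
  set G : E × Y → ℝ :=
    Set.indicator (W ×ˢ Set.univ.pi (fun _ : Fin k => W))
      (fun p => g (fun j => p.2 j - p.1)) with hGdef
  -- step 1 : transfer to product space
  have e := MeasurableEquiv.piFinSuccAbove (fun _ : Fin (k+1) => E) 0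
  have hmp := volume_preserving_piFinSuccAbove (fun _ : Fin (k+1) => E) 0
  have hcomp : ∀ p : E × Y,
      Set.indicator (Set.univ.pi (fun _ : Fin (k+1) => W))
        (fun x => g (fun j => x j.succ - x 0))
        ((MeasurableEquiv.piFinSuccAbove (fun _ : Fin (k+1) => E) 0).symm p) = G p := by
    rintro ⟨c, y⟩
    have hsymm : (MeasurableEquiv.piFinSuccAbove (fun _ : Fin (k+1) => E) 0).symm (c, y)
        = Fin.cons c y := by
      simp [MeasurableEquiv.piFinSuccAbove, Fin.consEquiv]
    rw [hsymm, hGdef]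
    have hval : (fun j : Fin k => Fin.cons (α := fun _ : Fin (k+1) => E) c y j.succ
        - Fin.cons (α := fun _ : Fin (k+1) => E) c y 0) = fun j => y j - c := by
      funext j; simp
    by_cases hmem : (c, y) ∈ W ×ˢ Set.univ.pi (fun _ : Fin k => W)
    · obtain ⟨hc, hy⟩ := Set.mem_prod.1 hmem
      have hxmem : Fin.cons (α := fun _ : Fin (k+1) => E) c y
          ∈ Set.univ.pi (fun _ : Fin (k+1) => W) := by
        intro i _
        induction i using Fin.cases with
        | zero => simpa using hc
        | succ j => simpa using hy j (Set.mem_univ j)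
      rw [Set.indicator_of_mem hxmem, Set.indicator_of_mem (Set.mem_prod.2 ⟨hc, hy⟩), hval]
    · have hxmem : Fin.cons (α := fun _ : Fin (k+1) => E) c y
          ∉ Set.univ.pi (fun _ : Fin (k+1) => W) := by
        intro hx
        apply hmem
        exact Set.mem_prod.2 ⟨by simpa using hx 0 (Set.mem_univ _), fun j _ => by
          simpa using hx j.succ (Set.mem_univ _)⟩
      rw [Set.indicator_of_notMem hxmem, Set.indicator_of_notMem hmem]
  have htrans : (∫ p : E × Y, Set.indicator (Set.univ.pi fun _ : Fin (k+1) => W)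
        (fun x => g fun j => x j.succ - x 0)
        ((MeasurableEquiv.piFinSuccAbove (fun _ : Fin (k+1) => E) 0).symm p)
        ∂((volume : Measure E).prod (volume : Measure Y)))
      = ∫ x, Set.indicator (Set.univ.pi fun _ : Fin (k+1) => W)
        (fun x => g fun j => x j.succ - x 0) x :=
    (hmp.symm _).integral_comp (MeasurableEquiv.measurableEmbedding _) _
  have step1 :
      ∫ x in Set.univ.pi (fun _ : Fin (k+1) => W), g (fun j => x j.succ - x 0)
        = ∫ p, G p ∂((volume : Measure E).prod (volume : Measure Y)) := by
    rw [← integral_indicator hpiWm, ← htrans]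
    exact integral_congr_ae (Filter.Eventually.of_forall hcomp)
  -- step 2 : integrability of G
  have hGaesm : AEStronglyMeasurable G ((volume : Measure E).prod (volume : Measure Y)) := by
    apply AEStronglyMeasurable.indicator _ (hWm.prod hpiWkm)
    exact hg.1.comp_quasiMeasurePreserving aux_qmp
  have hGint : Integrable G ((volume : Measure E).prod (volume : Measure Y)) := by
    refine ⟨hGaesm, ?_⟩
    rw [hasFiniteIntegral_def]
    have hsub : ∀ y : Y, ∀ c : E, (fun j => y j - c) = y + (-(fun _ => c : Y)) := by
      intro y c; funext j; simp [sub_eq_add_neg]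
    have hinner : ∀ c : E, (∫⁻ y, (‖G (c, y)‖₊ : ENNReal))
        ≤ Set.indicator W (fun _ => ∫⁻ z, (‖g z‖₊ : ENNReal)) c := by
      intro c
      by_cases hc : c ∈ W
      · rw [Set.indicator_of_mem hc]
        calc (∫⁻ y, (‖G (c, y)‖₊ : ENNReal))
            ≤ ∫⁻ y : Fin k → EuclideanSpace ℝ (Fin d), (‖g (fun j => y j - c)‖₊ : ENNReal) := by
              apply lintegral_mono; intro y
              show (‖G (c, y)‖₊ : ENNReal) ≤ (‖g (fun j => y j - c)‖₊ : ENNReal)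
              rw [hGdef]
              by_cases hy : (c, y) ∈ W ×ˢ Set.univ.pi (fun _ : Fin k => W)
              · rw [Set.indicator_of_mem hy]
              · rw [Set.indicator_of_notMem hy]; simp
          _ = ∫⁻ z, (‖g z‖₊ : ENNReal) := by
              simp only [hsub _ c]
              exact lintegral_add_right_eq_self (fun z : Y => (‖g z‖₊ : ENNReal)) _
      · have hz : ∀ y : Y, G (c, y) = 0 := by
          intro y; rw [hGdef]; apply Set.indicator_of_notMem
          exact fun h => hc (Set.mem_prod.1 h).1
        rw [Set.indicator_of_notMem hc]
        simp [hz]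
    calc ∫⁻ p, (‖G p‖₊ : ENNReal) ∂((volume : Measure E).prod (volume : Measure Y))
        = ∫⁻ c, ∫⁻ y, (‖G (c, y)‖₊ : ENNReal) := by
          rw [MeasureTheory.lintegral_prod _ hGaesm.nnnorm.aemeasurable.coe_nnreal_ennreal]
      _ ≤ ∫⁻ c, Set.indicator W (fun _ => ∫⁻ z, (‖g z‖₊ : ENNReal)) c :=
          lintegral_mono hinner
      _ = (∫⁻ z, (‖g z‖₊ : ENNReal)) * volume W := by
          rw [lintegral_indicator hWm, MeasureTheory.setLIntegral_const]
      _ < ⊤ := ENNReal.mul_lt_top hg.2 hWfin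
  -- step 3 : Fubini and inner translation
  have step3 : ∀ c : E, (∫ y, G (c, y)) = Set.indicator W
      (fun c => ∫ z, Set.indicator {z : Y | ∀ j, z j + c ∈ W} g z) c := by
    intro c
    by_cases hc : c ∈ W
    · rw [Set.indicator_of_mem hc]
      have h1 : ∀ y : Fin k → EuclideanSpace ℝ (Fin d), G (c, y)
          = Set.indicator (Set.univ.pi fun _ : Fin k => W)
            (fun y => g (fun j => y j - c)) y := by
        intro y; rw [hGdef]
        by_cases hy : y ∈ Set.univ.pi (fun _ : Fin k => W)
        · rw [Set.indicator_of_mem (Set.mem_prod.2 ⟨hc, hy⟩), Set.indicator_of_mem hy]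
        · rw [Set.indicator_of_notMem (fun h => hy (Set.mem_prod.1 h).2),
            Set.indicator_of_notMem hy]
      simp only [h1]
      have h2 := MeasureTheory.integral_add_right_eq_self
        (μ := (volume : Measure (Fin k → EuclideanSpace ℝ (Fin d))))
        (fun y => Set.indicator (Set.univ.pi fun _ : Fin k => W)
          (fun y => g (fun j => y j - c)) y)
        ((fun _ => c : Fin k → EuclideanSpace ℝ (Fin d)))
      rw [← h2]
      apply integral_congr_ae
      filter_upwards with z
      by_cases hz : z ∈ {z : Fin k → EuclideanSpace ℝ (Fin d) | ∀ j, z j + c ∈ W}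
      · have hmem : (z + (fun _ => c) : Fin k → EuclideanSpace ℝ (Fin d))
            ∈ Set.univ.pi (fun _ : Fin k => W) := fun j _ => hz j
        show Set.indicator (Set.univ.pi fun _ : Fin k => W) _ _ = _
        rw [Set.indicator_of_mem hmem, Set.indicator_of_mem hz]
        congr 1; funext j; show z j + c - c = z j; simp
      · have hmem : (z + (fun _ => c) : Fin k → EuclideanSpace ℝ (Fin d))
            ∉ Set.univ.pi (fun _ : Fin k => W) := fun h => hz (fun j => h j (Set.mem_univ j))
        show Set.indicator (Set.univ.pi fun _ : Fin k => W) _ _ = _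
        rw [Set.indicator_of_notMem hmem, Set.indicator_of_notMem hz]
    · rw [Set.indicator_of_notMem hc]
      have hz : ∀ y : Fin k → EuclideanSpace ℝ (Fin d), G (c, y) = 0 := fun y => by
        rw [hGdef]; exact Set.indicator_of_notMem (fun h => hc (Set.mem_prod.1 h).1) _
      simp [hz]
  constructor
  · rw [step1, MeasureTheory.integral_prod _ hGint]
    exact integral_congr_ae (Filter.Eventually.of_forall step3)
  · exact hGint.integral_prod_left.congr (Filter.Eventually.of_forall step3)

lemma key_bound (g : Y → ℝ) (hg : Integrable g)
    (W : Set E) (hWc : IsCompact W) (ρ : ℝ) :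
    |(∫ x in Set.univ.pi (fun _ : Fin (k+1) => W), g (fun j => x j.succ - x 0))
        - (volume W).toReal * ∫ z, g z|
      ≤ (volume W).toReal
          * (∑ i : Fin k, ∫ z, Set.indicator {z : Y | ρ ≤ ‖z i‖} (fun z => |g z|) z)
        + (volume ({x | infDist x (frontier W) ≤ ρ} ∩ W)).toReal * ∫ z, |g z| := by
  obtain ⟨hrepr, hΦint⟩ := key_repr g hg W hWc
  rw [hrepr]
  have hWm : MeasurableSet W := hWc.measurableSet
  have hWfin : volume W < ⊤ := hWc.measure_lt_top
  set bad : Set E := {x | infDist x (frontier W) ≤ ρ} ∩ W with hbaddef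
  have hbadm : MeasurableSet bad :=
    ((isClosed_le (continuous_infDist_pt _) continuous_const).measurableSet).inter hWm
  have hbadfin : volume bad < ⊤ := lt_of_le_of_lt (measure_mono Set.inter_subset_right) hWfin
  set Φ : E → ℝ := fun c => ∫ z, Set.indicator {z : Y | ∀ j, z j + c ∈ W} g z with hΦdef
  set I : ℝ := ∫ z, g z with hIdef
  set L : ℝ := ∫ z, |g z| with hLdef
  set S : ℝ := ∑ i : Fin k, ∫ z, Set.indicator {z : Y | ρ ≤ ‖z i‖} (fun z => |g z|) z
    with hSdef
  have hAm : ∀ c : E, MeasurableSet {z : Y | ∀ j, z j + c ∈ W} := by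
    intro c
    have : {z : Y | ∀ j, z j + c ∈ W} = ⋂ j, (fun z : Y => z j + c) ⁻¹' W := by
      ext z; simp [Set.mem_iInter]
    rw [this]
    exact MeasurableSet.iInter fun j =>
      (show Measurable (fun z : Y => z j + c) from
        ((continuous_apply j).add continuous_const).measurable) hWm
  have hBim : ∀ i : Fin k, MeasurableSet {z : Y | ρ ≤ ‖z i‖} := fun i =>
    measurableSet_le measurable_const (measurable_pi_apply i).norm
  have habs : Integrable (fun z : Y => |g z|) := hg.abs
  have hεint : ∀ i : Fin k,
      Integrable (Set.indicator {z : Y | ρ ≤ ‖z i‖} (fun z => |g z|)) := fun i =>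
    habs.indicator (hBim i)
  have hεnn : ∀ i : Fin k,
      0 ≤ ∫ z, Set.indicator {z : Y | ρ ≤ ‖z i‖} (fun z => |g z|) z := fun i =>
    integral_nonneg fun z => Set.indicator_nonneg (fun z _ => abs_nonneg _) z
  have hSnn : 0 ≤ S := Finset.sum_nonneg fun i _ => hεnn i
  have hLnn : 0 ≤ L := integral_nonneg fun z => abs_nonneg _
  -- pointwise bounds on |Φ c - I|
  have key1 : ∀ c : E, |Φ c - I|
      ≤ ∫ z, Set.indicator {z : Y | ∀ j, z j + c ∈ W}ᶜ (fun z => |g z|) z := by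
    intro c
    have hgA : Integrable (Set.indicator {z : Y | ∀ j, z j + c ∈ W} g) :=
      hg.indicator (hAm c)
    have hgAc : Integrable (Set.indicator {z : Y | ∀ j, z j + c ∈ W}ᶜ g) :=
      hg.indicator (hAm c).compl
    have hsplit : I = Φ c + ∫ z, Set.indicator {z : Y | ∀ j, z j + c ∈ W}ᶜ g z := by
      rw [hΦdef]
      rw [← integral_add hgA hgAc]
      apply integral_congr_ae
      filter_upwards with z
      by_cases hz : z ∈ {z : Y | ∀ j, z j + c ∈ W}
      · simp [Set.indicator_of_mem hz, Set.indicator_of_notMem (Set.notMem_compl_iff.2 hz)]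
      · simp [Set.indicator_of_notMem hz, Set.indicator_of_mem (Set.mem_compl hz)]
    have h1 : Φ c - I = -(∫ z, Set.indicator {z : Y | ∀ j, z j + c ∈ W}ᶜ g z) := by
      rw [hsplit]; ring
    rw [h1, abs_neg]
    calc |∫ z, Set.indicator {z : Y | ∀ j, z j + c ∈ W}ᶜ g z|
        ≤ ∫ z, |Set.indicator {z : Y | ∀ j, z j + c ∈ W}ᶜ g z| := by
          simpa [Real.norm_eq_abs] using
            norm_integral_le_integral_norm (μ := (volume : Measure Y))
              (Set.indicator {z : Y | ∀ j, z j + c ∈ W}ᶜ g)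
      _ = ∫ z, Set.indicator {z : Y | ∀ j, z j + c ∈ W}ᶜ (fun z => |g z|) z := by
          apply integral_congr_ae
          filter_upwards with z
          by_cases hz : z ∈ {z : Y | ∀ j, z j + c ∈ W}ᶜ
          · simp [Set.indicator_of_mem hz]
          · simp [Set.indicator_of_notMem hz]
  have key2 : ∀ c ∈ W, ρ < infDist c (frontier W) →
      (∫ z, Set.indicator {z : Y | ∀ j, z j + c ∈ W}ᶜ (fun z => |g z|) z) ≤ S := by
    intro c hc hgood
    have hball : ball c ρ ⊆ W := aux_ball_subset hc hgood
    have hptw : ∀ z : Y, Set.indicator {z : Y | ∀ j, z j + c ∈ W}ᶜ (fun z => |g z|) z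
        ≤ ∑ i : Fin k, Set.indicator {z : Y | ρ ≤ ‖z i‖} (fun z => |g z|) z := by
      intro z
      by_cases hz : z ∈ {z : Y | ∀ j, z j + c ∈ W}ᶜ
      · rw [Set.indicator_of_mem hz]
        obtain ⟨j, hj⟩ := not_forall.1 hz
        have hρj : z ∈ {z : Y | ρ ≤ ‖z j‖} := by
          by_contra h
          apply hj
          apply hball
          rw [mem_ball, dist_eq_norm, add_sub_cancel_right]
          exact not_le.1 (by simpa using h)
        calc |g z| = Set.indicator {z : Y | ρ ≤ ‖z j‖} (fun z => |g z|) z :=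
              (Set.indicator_of_mem hρj (fun z => |g z|)).symm
          _ ≤ ∑ i : Fin k, Set.indicator {z : Y | ρ ≤ ‖z i‖} (fun z => |g z|) z :=
              Finset.single_le_sum
                (f := fun i : Fin k => Set.indicator {z : Y | ρ ≤ ‖z i‖} (fun z => |g z|) z)
                (fun i _ => Set.indicator_nonneg (fun z _ => abs_nonneg _) z)
                (Finset.mem_univ j)
      · rw [Set.indicator_of_notMem hz]
        exact Finset.sum_nonneg fun i _ => Set.indicator_nonneg (fun z _ => abs_nonneg _) z
    calc (∫ z, Set.indicator {z : Y | ∀ j, z j + c ∈ W}ᶜ (fun z => |g z|) z)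
        ≤ ∫ z, ∑ i : Fin k, Set.indicator {z : Y | ρ ≤ ‖z i‖} (fun z => |g z|) z :=
          integral_mono (habs.indicator (hAm c).compl)
            (integrable_finset_sum _ fun i _ => hεint i) hptw
      _ = S := integral_finset_sum _ fun i _ => hεint i
  have key3 : ∀ c : E,
      (∫ z, Set.indicator {z : Y | ∀ j, z j + c ∈ W}ᶜ (fun z => |g z|) z) ≤ L := by
    intro c
    apply integral_mono (habs.indicator (hAm c).compl) habs
    exact Set.indicator_le_self' fun z _ => abs_nonneg _
  -- combine
  have hIind : Integrable (Set.indicator W (fun _ => I)) :=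
    (integrable_indicator_iff hWm).2 (integrableOn_const hWfin.ne)
  have hSind : Integrable (Set.indicator W (fun _ => S)) :=
    (integrable_indicator_iff hWm).2 (integrableOn_const hWfin.ne)
  have hLind : Integrable (Set.indicator bad (fun _ => L)) :=
    (integrable_indicator_iff hbadm).2 (integrableOn_const hbadfin.ne)
  have hpt : ∀ c : E, |Set.indicator W Φ c - Set.indicator W (fun _ => I) c|
      ≤ Set.indicator W (fun _ => S) c + Set.indicator bad (fun _ => L) c := by
    intro c
    by_cases hc : c ∈ W
    · rw [Set.indicator_of_mem hc, Set.indicator_of_mem hc, Set.indicator_of_mem hc]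
      by_cases hbadc : infDist c (frontier W) ≤ ρ
      · rw [Set.indicator_of_mem (show c ∈ bad from ⟨hbadc, hc⟩)]
        have := le_trans (key1 c) (key3 c)
        linarith
      · rw [Set.indicator_of_notMem (show c ∉ bad from fun h => hbadc h.1)]
        have := le_trans (key1 c) (key2 c hc (not_le.1 hbadc))
        linarith
    · rw [Set.indicator_of_notMem hc, Set.indicator_of_notMem hc,
        Set.indicator_of_notMem hc,
        Set.indicator_of_notMem (show c ∉ bad from fun h => hc h.2)]
      simp
  calc |(∫ c, Set.indicator W Φ c) - (volume W).toReal * I|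
      = |∫ c, (Set.indicator W Φ c - Set.indicator W (fun _ => I) c)| := by
        rw [integral_sub hΦint hIind, integral_indicator_const I hWm, smul_eq_mul]
        rfl
    _ ≤ ∫ c, |Set.indicator W Φ c - Set.indicator W (fun _ => I) c| := by
        have := norm_integral_le_integral_norm
          (fun c => Set.indicator W Φ c - Set.indicator W (fun _ => I) c) (μ := volume)
        simpa [Real.norm_eq_abs] using this
    _ ≤ ∫ c, (Set.indicator W (fun _ => S) c + Set.indicator bad (fun _ => L) c) := by
        exact integral_mono (hΦint.sub hIind).abs (hSind.add hLind) hpt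
    _ = (volume W).toReal * S + (volume bad).toReal * L := by
        rw [integral_add hSind hLind, integral_indicator_const S hWm,
          integral_indicator_const L hbadm, smul_eq_mul, smul_eq_mul]
        rfl


end Key

theorem translation_invariant_window_average_tendsto {d k : ℕ}
    (f : (Fin (k + 1) → EuclideanSpace ℝ (Fin d)) → ℝ)
    (hinv : ∀ (t : EuclideanSpace ℝ (Fin d)) (x : Fin (k + 1) → EuclideanSpace ℝ (Fin d)),
      f (fun i => x i + t) = f x)
    (hint : Integrable (fun y : Fin k → EuclideanSpace ℝ (Fin d) => f (Fin.cons 0 y)))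
    (W : ℕ → Set (EuclideanSpace ℝ (Fin d))) (hWc : ∀ n, IsCompact (W n))
    (hWmono : Monotone W) (hWunion : (⋃ n, W n) = Set.univ)
    (hWpos : ∀ n, 0 < (volume (W n)).toReal)
    (r : ℕ → ℝ) (hrmono : Monotone r) (hrlim : Tendsto r atTop atTop)
    (hborder : Tendsto
      (fun n => (volume ({x | infDist x (frontier (W n)) ≤ r n} ∩ W n)).toReal /
        (volume (W n)).toReal) atTop (nhds 0)) :
    Tendsto
      (fun n => (1 / (volume (W n)).toReal) *
        ∫ x in Set.univ.pi (fun _ : Fin (k + 1) => W n), f x)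
      atTop
      (nhds (∫ y : Fin k → EuclideanSpace ℝ (Fin d), f (Fin.cons 0 y))) := by
  set g : (Fin k → EuclideanSpace ℝ (Fin d)) → ℝ := fun y => f (Fin.cons 0 y) with hgdef
  have hg : Integrable g := hint
  set I : ℝ := ∫ y, g y with hIdef
  set L : ℝ := ∫ z, |g z| with hLdef
  set u : ℕ → ℝ := fun n => (1 / (volume (W n)).toReal) *
    ∫ x in Set.univ.pi (fun _ : Fin (k + 1) => W n), f x with hudef
  have hfx : ∀ x : Fin (k+1) → EuclideanSpace ℝ (Fin d),
      f x = g (fun j => x j.succ - x 0) := by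
    intro x
    have h1 := hinv (-(x 0)) x
    have h2 : (fun i => x i + -(x 0))
        = Fin.cons (α := fun _ : Fin (k+1) => EuclideanSpace ℝ (Fin d)) 0
            (fun j => x j.succ - x 0) := by
      funext i
      induction i using Fin.cases with
      | zero => simp
      | succ j => simp [sub_eq_add_neg]
    rw [← h1, h2]
  have hWeq : ∀ n, (∫ x in Set.univ.pi (fun _ : Fin (k+1) => W n), f x)
      = ∫ x in Set.univ.pi (fun _ : Fin (k+1) => W n), g (fun j => x j.succ - x 0) := by
    intro n
    apply integral_congr_ae
    filter_upwards with x using hfx x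
  set ε : ℕ → Fin k → ℝ := fun n i =>
    ∫ z, Set.indicator {z : Fin k → EuclideanSpace ℝ (Fin d) | r n ≤ ‖z i‖}
      (fun z => |g z|) z with hεdef
  have hbound : ∀ n, |u n - I| ≤ (∑ i : Fin k, ε n i)
      + (volume ({x | infDist x (frontier (W n)) ≤ r n} ∩ W n)).toReal
          / (volume (W n)).toReal * L := by
    intro n
    have hv : (volume (W n)).toReal ≠ 0 := ne_of_gt (hWpos n)
    have hkb := key_bound g hg (W n) (hWc n) (r n)
    have hu : u n - I = (1 / (volume (W n)).toReal)
        * ((∫ x in Set.univ.pi (fun _ : Fin (k+1) => W n), g (fun j => x j.succ - x 0))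
            - (volume (W n)).toReal * I) := by
      rw [hudef]
      simp only [hWeq n]
      field_simp
    rw [hu, abs_mul, abs_of_nonneg (by positivity : (0:ℝ) ≤ 1 / (volume (W n)).toReal)]
    calc (1 / (volume (W n)).toReal)
          * |(∫ x in Set.univ.pi (fun _ : Fin (k+1) => W n), g (fun j => x j.succ - x 0))
              - (volume (W n)).toReal * I|
        ≤ (1 / (volume (W n)).toReal)
          * ((volume (W n)).toReal * (∑ i : Fin k, ε n i)
            + (volume ({x | infDist x (frontier (W n)) ≤ r n} ∩ W n)).toReal * L) := by
          apply mul_le_mul_of_nonneg_left hkb (by positivity)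
      _ = (∑ i : Fin k, ε n i)
          + (volume ({x | infDist x (frontier (W n)) ≤ r n} ∩ W n)).toReal
              / (volume (W n)).toReal * L := by
          field_simp
  have hS0 : Tendsto (fun n => ∑ i : Fin k, ε n i) atTop (nhds 0) := by
    have hi : ∀ i : Fin k, Tendsto (fun n => ε n i) atTop (nhds 0) := fun i =>
      aux_tail_tendsto (fun z => |g z|) hg.abs (fun z => abs_nonneg _)
        (fun z => ‖z i‖) (measurable_pi_apply i).norm r hrlim
    have h := tendsto_finset_sum (Finset.univ : Finset (Fin k)) (fun i _ => hi i)
    simpa using h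
  have hB0 : Tendsto (fun n =>
      (volume ({x | infDist x (frontier (W n)) ≤ r n} ∩ W n)).toReal
        / (volume (W n)).toReal * L) atTop (nhds 0) := by
    simpa using hborder.mul_const L
  have hb0 : Tendsto (fun n => (∑ i : Fin k, ε n i)
      + (volume ({x | infDist x (frontier (W n)) ≤ r n} ∩ W n)).toReal
          / (volume (W n)).toReal * L) atTop (nhds 0) := by
    simpa using hS0.add hB0
  have hdiff : Tendsto (fun n => u n - I) atTop (nhds 0) :=
    squeeze_zero_norm (fun n => by simpa [Real.norm_eq_abs] using hbound n) hb0
  have := hdiff.add_const I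
  simpa using this
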